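/- Let n ≥ 1 and let A = {2, 4, 8, ..., 2ⁿ}. Setting D = A - A, one has n²/2 ≤ |D| ≤ n², and both |DD| ≤ 25|D|^{3/2} and |D/D| ≤ 25|D|^{3/2}, where DD = {de : d, e ∈ D} and D/D = {d/e : d, e ∈ D, e ≠ 0}. -/

import Mathlib

open Finset

/-- The difference set A - A. -/
noncomputable def diffSet (A : Finset ℝ) : Finset ℝ :=
  (A ×ˢ A).image (fun p => p.1 - p.2)

/-- The product set X·Y. -/
noncomputable def prodSet (X Y : Finset ℝ) : Finset ℝ :=
  (X ×ˢ Y).image (fun p => p.1 * p.2)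

/-- The quotient set X/Y (excluding division by zero). -/
noncomputable def quotSet (X Y : Finset ℝ) : Finset ℝ :=
  ((X ×ˢ Y).filter (fun p => p.2 ≠ 0)).image (fun p => p.1 / p.2)

lemma nat_key_aux (j t m m' : ℕ) (hm : 0 < m) (hm' : 0 < m')
    (h : 2^j * (2^m - 1) = 2^(j+t+1) * (2^m' - 1)) : False := by
  have h1 : (2:ℕ)^m - 1 = 2^(t+1) * (2^m' - 1) := by
    have hp : 0 < (2:ℕ)^j := Nat.pow_pos (by norm_num)
    apply Nat.eq_of_mul_eq_mul_left hp
    rw [h, pow_add, pow_add]; ring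
  have h2 : 2 ≤ (2:ℕ)^m := by
    calc 2 = 2^1 := (pow_one 2).symm
    _ ≤ 2^m := Nat.pow_le_pow_right (by norm_num) hm
  have h5 : 2 ∣ (2:ℕ)^(t+1) := dvd_pow_self 2 (by omega)
  obtain ⟨a, ha⟩ := dvd_pow_self 2 hm.ne' (α := ℕ)
  obtain ⟨b, hb⟩ := h5
  rw [ha, hb, mul_assoc] at h1
  rw [ha] at h2
  omega

lemma nat_key (j m j' m' : ℕ) (hm : 0 < m) (hm' : 0 < m')
    (h : 2^j * (2^m - 1) = 2^j' * (2^m' - 1)) : j = j' ∧ m = m' := by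
  have hj : j = j' := by
    rcases lt_trichotomy j j' with hlt | heq | hgt
    · obtain ⟨t, rfl⟩ := Nat.exists_eq_add_of_lt hlt
      exact (nat_key_aux _ _ _ _ hm hm' h).elim
    · exact heq
    · obtain ⟨t, rfl⟩ := Nat.exists_eq_add_of_lt hgt
      exact (nat_key_aux _ _ _ _ hm' hm h.symm).elim
  subst hj
  refine ⟨rfl, ?_⟩
  have hp : 0 < (2:ℕ)^j := Nat.pow_pos (by norm_num)
  have h1 : (2:ℕ)^m - 1 = 2^m' - 1 := Nat.eq_of_mul_eq_mul_left hp h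
  have h2 : 1 ≤ (2:ℕ)^m := Nat.one_le_two_pow
  have h3 : 1 ≤ (2:ℕ)^m' := Nat.one_le_two_pow
  have : (2:ℕ)^m = 2^m' := by omega
  exact Nat.pow_right_injective (by norm_num) this

lemma cast_pow_sub (i j : ℕ) (hij : j < i) :
    ((2^j * (2^(i-j) - 1) : ℕ) : ℝ) = (2:ℝ)^i - 2^j := by
  have h2 : 1 ≤ (2:ℕ)^(i-j) := Nat.one_le_two_pow
  push_cast [h2]
  rw [mul_sub, mul_one, ← pow_add]
  congr 2
  omega

lemma real_diff_inj (i j k l : ℕ) (hij : j < i) (hkl : l < k)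
    (h : (2:ℝ)^i - 2^j = 2^k - 2^l) : i = k ∧ j = l := by
  have h1 := cast_pow_sub i j hij
  have h2 := cast_pow_sub k l hkl
  have h3 : (2^j * (2^(i-j) - 1) : ℕ) = 2^l * (2^(k-l) - 1) := by
    have := h1.trans (h.trans h2.symm)
    exact_mod_cast this
  obtain ⟨hjl, hmm⟩ := nat_key _ _ _ _ (by omega) (by omega) h3
  omega

lemma mem_diffSet {A : Finset ℝ} {x : ℝ} :
    x ∈ diffSet A ↔ ∃ a ∈ A, ∃ b ∈ A, x = a - b := by
  simp only [diffSet, mem_image, mem_product, Prod.exists]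
  constructor
  · rintro ⟨a, b, ⟨ha, hb⟩, rfl⟩; exact ⟨a, ha, b, hb, rfl⟩
  · rintro ⟨a, ha, b, hb, rfl⟩; exact ⟨a, b, ⟨ha, hb⟩, rfl⟩

lemma diff_struct (n : ℕ) (A : Finset ℝ)
    (hA : A = (Finset.Icc 1 n).image (fun k : ℕ => (2 : ℝ) ^ k))
    (x : ℝ) (hx : x ∈ diffSet A) :
    x = 0 ∨ ∃ ε : ℝ, (ε = -1 ∨ ε = 1) ∧ ∃ j ∈ Finset.Icc 1 n, ∃ m ∈ Finset.Icc 1 n,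
      x = ε * 2^j * (2^m - 1) := by
  rw [mem_diffSet] at hx
  obtain ⟨a, ha, b, hb, rfl⟩ := hx
  rw [hA] at ha hb
  simp only [mem_image, mem_Icc] at ha hb
  obtain ⟨i, hi, rfl⟩ := ha
  obtain ⟨j, hj, rfl⟩ := hb
  rcases lt_trichotomy i j with hlt | heq | hgt
  · right
    refine ⟨-1, Or.inl rfl, i, by simp [mem_Icc]; omega, j - i, by simp [mem_Icc]; omega, ?_⟩
    have : (2:ℝ)^i * 2^(j-i) = 2^j := by rw [← pow_add]; congr 1; omega
    nlinarith [this]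
  · left; rw [heq]; ring
  · right
    refine ⟨1, Or.inr rfl, j, by simp [mem_Icc]; omega, i - j, by simp [mem_Icc]; omega, ?_⟩
    have : (2:ℝ)^j * 2^(i-j) = 2^i := by rw [← pow_add]; congr 1; omega
    nlinarith [this]

lemma diff_card_lower (n : ℕ) (hn : 1 ≤ n) (A : Finset ℝ)
    (hA : A = (Finset.Icc 1 n).image (fun k : ℕ => (2 : ℝ) ^ k)) :
    n * n - n + 1 ≤ (diffSet A).card := by
  classical
  set s : Finset ℕ := Finset.Icc 1 n with hs
  set f : ℕ × ℕ → ℝ := fun p => (2:ℝ)^p.1 - 2^p.2 with hf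
  have hsub : insert (0:ℝ) (s.offDiag.image f) ⊆ diffSet A := by
    intro x hx
    rcases mem_insert.1 hx with rfl | hx
    · rw [mem_diffSet]
      refine ⟨2, ?_, 2, ?_, by ring⟩ <;>
      · rw [hA]; simp only [mem_image]; exact ⟨1, by rw [hs, mem_Icc]; omega, by norm_num⟩
    · obtain ⟨p, hp, rfl⟩ := mem_image.1 hx
      rw [mem_offDiag] at hp
      rw [mem_diffSet]
      refine ⟨2^p.1, ?_, 2^p.2, ?_, rfl⟩ <;>
      · rw [hA]; simp only [mem_image]
        first
        | exact ⟨p.1, hp.1, rfl⟩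
        | exact ⟨p.2, hp.2.1, rfl⟩
  have hinj : Set.InjOn f s.offDiag := by
    rintro ⟨i, j⟩ hij ⟨k, l⟩ hkl h
    rw [Finset.mem_coe, mem_offDiag] at hij hkl
    simp only [hf] at h
    have hne1 : i ≠ j := hij.2.2
    have hne2 : k ≠ l := hkl.2.2
    have hmono : StrictMono (fun t : ℕ => (2:ℝ)^t) := fun a b hab => by
      exact pow_lt_pow_right₀ (by norm_num) hab
    rcases lt_or_gt_of_ne hne1 with h1 | h1
    · have hl : (2:ℝ)^i - 2^j < 0 := by have := hmono h1; simp at this ⊢; linarith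
      have h2 : k < l := by
        rcases lt_trichotomy k l with h' | h' | h'
        · exact h'
        · exact absurd h' hne2
        · exfalso; have := hmono h'; simp only at this; linarith
      have : (2:ℝ)^j - 2^i = 2^l - 2^k := by linarith
      obtain ⟨e1, e2⟩ := real_diff_inj j i l k h1 h2 this
      simp [e1, e2]
    · have hl : (0:ℝ) < (2:ℝ)^i - 2^j := by have := hmono h1; simp at this ⊢; linarith
      have h2 : l < k := by
        rcases lt_trichotomy k l with h' | h' | h'
        · exfalso; have := hmono h'; simp only at this; linarith
        · exact absurd h' hne2
        · exact h'
      obtain ⟨e1, e2⟩ := real_diff_inj i j k l h1 h2 (by linarith)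
      simp [e1, e2]
  have hzero : (0:ℝ) ∉ s.offDiag.image f := by
    rw [mem_image]
    rintro ⟨⟨i, j⟩, hp, hfp⟩
    rw [mem_offDiag] at hp
    have hne : i ≠ j := hp.2.2
    have : (2:ℝ)^i = 2^j := by simp only [hf] at hfp; linarith
    exact hne (by
      have hmono : StrictMono (fun t : ℕ => (2:ℝ)^t) := fun a b hab =>
        pow_lt_pow_right₀ (by norm_num) hab
      exact hmono.injective this)
  have hcard1 : (s.offDiag.image f).card = s.offDiag.card :=
    Finset.card_image_of_injOn hinj
  have hcard2 : s.offDiag.card = n * n - n := by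
    rw [Finset.offDiag_card]
    simp [hs, Nat.card_Icc]
  calc n * n - n + 1 = (s.offDiag.image f).card + 1 := by rw [hcard1, hcard2]
    _ = (insert (0:ℝ) (s.offDiag.image f)).card := (Finset.card_insert_of_notMem hzero).symm
    _ ≤ (diffSet A).card := Finset.card_le_card hsub

lemma prod_card_bound (n : ℕ) (A : Finset ℝ)
    (hA : A = (Finset.Icc 1 n).image (fun k : ℕ => (2 : ℝ) ^ k)) :
    (prodSet (diffSet A) (diffSet A)).card ≤ 2 * (2*n+1) * n * n + 1 := by
  classical
  set g : ℝ × ℕ × ℕ × ℕ → ℝ := fun q => q.1 * 2^q.2.1 * ((2^q.2.2.1 - 1) * (2^q.2.2.2 - 1))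
    with hg
  set S : Finset (ℝ × ℕ × ℕ × ℕ) :=
    ({-1,1} : Finset ℝ) ×ˢ (Finset.Icc 0 (2*n)) ×ˢ (Finset.Icc 1 n) ×ˢ (Finset.Icc 1 n) with hS
  have hsub : prodSet (diffSet A) (diffSet A) ⊆ insert (0:ℝ) (S.image g) := by
    intro z hz
    simp only [prodSet, mem_image, mem_product, Prod.exists] at hz
    obtain ⟨d, e, ⟨hd, he⟩, rfl⟩ := hz
    rcases diff_struct n A hA d hd with rfl | ⟨ε, hε, j, hj, m, hm, rfl⟩
    · simp
    rcases diff_struct n A hA e he with rfl | ⟨ε', hε', j', hj', m', hm', rfl⟩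
    · simp
    apply mem_insert_of_mem
    rw [mem_image]
    refine ⟨(ε * ε', j + j', m, m'), ?_, ?_⟩
    · rw [hS]
      simp only [mem_product, mem_insert, mem_singleton, mem_Icc]
      rw [mem_Icc] at hj hj' hm hm'
      refine ⟨?_, ⟨by omega, by omega⟩, ⟨by omega, by omega⟩, ⟨by omega, by omega⟩⟩
      rcases hε with rfl | rfl <;> rcases hε' with rfl | rfl <;> norm_num
    · simp only [hg, pow_add]; ring
  calc (prodSet (diffSet A) (diffSet A)).card ≤ (insert (0:ℝ) (S.image g)).card :=
        Finset.card_le_card hsub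
    _ ≤ (S.image g).card + 1 := Finset.card_insert_le _ _
    _ ≤ S.card + 1 := by gcongr; exact Finset.card_image_le
    _ = 2 * (2*n+1) * n * n + 1 := by
        rw [hS]
        simp [Nat.card_Icc, Finset.card_pair (by norm_num : (-1:ℝ) ≠ 1)]
        ring

lemma quot_card_bound (n : ℕ) (A : Finset ℝ)
    (hA : A = (Finset.Icc 1 n).image (fun k : ℕ => (2 : ℝ) ^ k)) :
    (quotSet (diffSet A) (diffSet A)).card ≤ 2 * (2*n+1) * n * n + 1 := by
  classical
  set g : ℝ × ℤ × ℕ × ℕ → ℝ := fun q => q.1 * (2:ℝ)^q.2.1 * ((2^q.2.2.1 - 1) / (2^q.2.2.2 - 1))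
    with hg
  set S : Finset (ℝ × ℤ × ℕ × ℕ) :=
    ({-1,1} : Finset ℝ) ×ˢ (Finset.Icc (-(n:ℤ)) n) ×ˢ (Finset.Icc 1 n) ×ˢ (Finset.Icc 1 n) with hS
  have hsub : quotSet (diffSet A) (diffSet A) ⊆ insert (0:ℝ) (S.image g) := by
    intro z hz
    simp only [quotSet, mem_image, mem_filter, mem_product, Prod.exists] at hz
    obtain ⟨d, e, ⟨⟨hd, he⟩, hne⟩, rfl⟩ := hz
    rcases diff_struct n A hA d hd with rfl | ⟨ε, hε, j, hj, m, hm, rfl⟩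
    · simp
    rcases diff_struct n A hA e he with rfl | ⟨ε', hε', j', hj', m', hm', rfl⟩
    · simp at hne
    apply mem_insert_of_mem
    rw [mem_image]
    have hm'1 : 1 ≤ m' := (mem_Icc.1 hm').1
    have hden : (2:ℝ)^m' - 1 ≠ 0 := by
      have : (1:ℝ) < 2^m' := by
        calc (1:ℝ) < 2^1 := by norm_num
        _ ≤ 2^m' := by apply pow_le_pow_right₀ <;> norm_num <;> omega
      linarith
    refine ⟨(ε * ε', (j:ℤ) - j', m, m'), ?_, ?_⟩
    · rw [hS]
      simp only [mem_product, mem_insert, mem_singleton, mem_Icc]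
      rw [mem_Icc] at hj hj' hm hm'
      refine ⟨?_, ⟨by omega, by omega⟩, ⟨by omega, by omega⟩, ⟨by omega, by omega⟩⟩
      rcases hε with rfl | rfl <;> rcases hε' with rfl | rfl <;> norm_num
    · simp only [hg]
      rw [zpow_sub₀ (by norm_num : (2:ℝ) ≠ 0), zpow_natCast, zpow_natCast]
      have h2j : (2:ℝ)^j' ≠ 0 := by positivity
      rcases hε with rfl | rfl <;> rcases hε' with rfl | rfl <;> field_simp <;> ring
  calc (quotSet (diffSet A) (diffSet A)).card ≤ (insert (0:ℝ) (S.image g)).card :=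
        Finset.card_le_card hsub
    _ ≤ (S.image g).card + 1 := Finset.card_insert_le _ _
    _ ≤ S.card + 1 := by gcongr; exact Finset.card_image_le
    _ = 2 * (2*n+1) * n * n + 1 := by
        rw [hS]
        simp [Nat.card_Icc, Int.card_Icc, Finset.card_pair (by norm_num : (-1:ℝ) ≠ 1)]
        rw [show ((n:ℤ) + 1 + n).toNat = 2*n+1 by omega]
        ring

lemma arith_key (x y z : ℝ) (hx : 1 ≤ x) (hy : x^2/2 ≤ y) (hz : z ≤ 4*x^3 + 2*x^2 + 1) :
    z ≤ 25 * y ^ ((3:ℝ)/2) := by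
  have h1 : (x^2/2)^((3:ℝ)/2) ≤ y^((3:ℝ)/2) :=
    Real.rpow_le_rpow (by positivity) hy (by norm_num)
  have h2 : (x^2/2)^((3:ℝ)/2) = x^3 / 2^((3:ℝ)/2) := by
    rw [Real.div_rpow (by positivity) (by norm_num)]
    congr 1
    rw [← Real.rpow_natCast x 2, ← Real.rpow_mul (by positivity), ← Real.rpow_natCast x 3]
    norm_num
  have hpos : (0:ℝ) ≤ (2:ℝ)^((3:ℝ)/2) := Real.rpow_nonneg (by norm_num) _
  have hsq : ((2:ℝ)^((3:ℝ)/2))^2 = 8 := by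
    rw [← Real.rpow_natCast ((2:ℝ)^((3:ℝ)/2)) 2, ← Real.rpow_mul (by norm_num)]
    norm_num
  have h3 : (2:ℝ)^((3:ℝ)/2) ≤ 3 := by nlinarith
  have h3' : (0:ℝ) < (2:ℝ)^((3:ℝ)/2) := by nlinarith
  have h4 : x^3/3 ≤ x^3 / 2^((3:ℝ)/2) :=
    div_le_div_of_nonneg_left (by positivity) h3' h3
  have h5 : z ≤ 25 * (x^3/3) := by nlinarith
  calc z ≤ 25 * (x^3/3) := h5
    _ ≤ 25 * (x^3 / 2^((3:ℝ)/2)) := by linarith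
    _ = 25 * (x^2/2)^((3:ℝ)/2) := by rw [h2]
    _ ≤ 25 * y^((3:ℝ)/2) := by linarith

theorem stmt_7 (n : ℕ) (hn : 1 ≤ n)
    (A : Finset ℝ) (hA : A = (Finset.Icc 1 n).image (fun k : ℕ => (2 : ℝ) ^ k)) :
    (n : ℝ) ^ 2 / 2 ≤ ((diffSet A).card : ℝ) ∧
    ((diffSet A).card : ℝ) ≤ (n : ℝ) ^ 2 ∧
    ((prodSet (diffSet A) (diffSet A)).card : ℝ) ≤
      25 * ((diffSet A).card : ℝ) ^ ((3 : ℝ) / 2) ∧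
    ((quotSet (diffSet A) (diffSet A)).card : ℝ) ≤
      25 * ((diffSet A).card : ℝ) ^ ((3 : ℝ) / 2) := by
  have hnR : (1:ℝ) ≤ (n:ℝ) := by exact_mod_cast hn
  -- lower bound
  have hlow : (n : ℝ) ^ 2 / 2 ≤ ((diffSet A).card : ℝ) := by
    have h := diff_card_lower n hn A hA
    have h' : ((n * n - n + 1 : ℕ) : ℝ) ≤ ((diffSet A).card : ℝ) := by exact_mod_cast h
    have hle : n ≤ n * n := Nat.le_mul_of_pos_left n (by omega)
    have hcast : ((n * n - n + 1 : ℕ) : ℝ) = (n:ℝ) * n - n + 1 := by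
      push_cast [hle]; ring
    rw [hcast] at h'
    nlinarith
  -- upper bound
  have hup : ((diffSet A).card : ℝ) ≤ (n : ℝ) ^ 2 := by
    have hAcard : A.card ≤ n := by
      rw [hA]
      calc ((Finset.Icc 1 n).image (fun k : ℕ => (2 : ℝ) ^ k)).card ≤ (Finset.Icc 1 n).card :=
            Finset.card_image_le
        _ = n := by simp [Nat.card_Icc]
    have h1 : (diffSet A).card ≤ A.card * A.card := by
      calc (diffSet A).card ≤ (A ×ˢ A).card := Finset.card_image_le
        _ = A.card * A.card := Finset.card_product A A
    have h2 : (diffSet A).card ≤ n * n := h1.trans (Nat.mul_le_mul hAcard hAcard)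
    calc ((diffSet A).card : ℝ) ≤ ((n * n : ℕ) : ℝ) := by exact_mod_cast h2
      _ = (n:ℝ)^2 := by push_cast; ring
  refine ⟨hlow, hup, ?_, ?_⟩
  · apply arith_key (n:ℝ) _ _ hnR hlow
    have h := prod_card_bound n A hA
    have h' : ((prodSet (diffSet A) (diffSet A)).card : ℝ) ≤ ((2 * (2*n+1) * n * n + 1 : ℕ) : ℝ) := by
      exact_mod_cast h
    calc ((prodSet (diffSet A) (diffSet A)).card : ℝ) ≤ ((2 * (2*n+1) * n * n + 1 : ℕ) : ℝ) := h'
      _ = 4*(n:ℝ)^3 + 2*(n:ℝ)^2 + 1 := by push_cast; ring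
  · apply arith_key (n:ℝ) _ _ hnR hlow
    have h := quot_card_bound n A hA
    have h' : ((quotSet (diffSet A) (diffSet A)).card : ℝ) ≤ ((2 * (2*n+1) * n * n + 1 : ℕ) : ℝ) := by
      exact_mod_cast h
    calc ((quotSet (diffSet A) (diffSet A)).card : ℝ) ≤ ((2 * (2*n+1) * n * n + 1 : ℕ) : ℝ) := h'
      _ = 4*(n:ℝ)^3 + 2*(n:ℝ)^2 + 1 := by push_cast; ring
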